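/- Let α ∈ (0,1), k̄ > 0, η̄ > 0, β ≥ -δ > 0 with δ < 0 ≤ -δ ≤ β, and σ̄ > 0. Then the function g₁(t) = (1/2 + η̄t^δ) - √((1/2 + η̄t^δ)² + 2(1-α)/(σ̄²k̄t^β)) is nondecreasing on (0,∞). -/

import Mathlib

/-- For the power-law scaling ATS with `δ < 0 ≤ -δ ≤ β`, the function
`g₁(t) = (1/2 + η̄t^δ) - √((1/2 + η̄t^δ)² + 2(1-α)/(σ̄²k̄t^β))` is nondecreasing on `(0,∞)`. -/
theorem stmt6 (α kbar ηbar σbar β δ : ℝ)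
    (hα0 : 0 < α) (hα1 : α < 1)
    (hk : 0 < kbar) (hη : 0 < ηbar) (hσ : 0 < σbar)
    (hδneg : δ < 0) (hβδ : -δ ≤ β) :
    MonotoneOn (fun t : ℝ => (1/2 + ηbar * t ^ δ)
        - Real.sqrt ((1/2 + ηbar * t ^ δ)^2 + 2 * (1 - α) / (σbar^2 * kbar * t ^ β)))
      (Set.Ioi 0) := by
  have hβ : 0 < β := lt_of_lt_of_le (by linarith) hβδ
  set C : ℝ := 2 * (1 - α) / (σbar ^ 2 * kbar) with hCdef
  have hC : 0 < C := div_pos (by linarith) (by positivity)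
  set u : ℝ → ℝ := fun t => 1/2 + ηbar * t ^ δ with hudef
  set w : ℝ → ℝ := fun t => (u t) ^ 2 + C * t ^ (-β) with hwdef
  have hupos : ∀ t : ℝ, 0 < t → 0 < u t := fun t ht => by
    have := Real.rpow_pos_of_pos ht δ; simp only [hudef]; positivity
  have hwpos : ∀ t : ℝ, 0 < t → 0 < w t := fun t ht => by
    have h1 := hupos t ht
    have h2 := Real.rpow_pos_of_pos ht (-β)
    simp only [hwdef]; positivity
  have heq : Set.EqOn (fun t : ℝ => (1/2 + ηbar * t ^ δ)
      - Real.sqrt ((1/2 + ηbar * t ^ δ)^2 + 2 * (1 - α) / (σbar^2 * kbar * t ^ β)))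
      (fun t => u t - Real.sqrt (w t)) (Set.Ioi 0) := by
    intro t ht
    have ht : (0:ℝ) < t := ht
    have : 2 * (1 - α) / (σbar^2 * kbar * t ^ β) = C * t ^ (-β) := by
      rw [Real.rpow_neg ht.le, hCdef]; field_simp
    simp only [hudef, hwdef, this]
  -- derivative computation
  have hderiv : ∀ t : ℝ, 0 < t → HasDerivAt (fun t => u t - Real.sqrt (w t))
      ((ηbar * (δ * t ^ (δ - 1))) -
        (2 * u t * (ηbar * (δ * t ^ (δ - 1))) + C * (-β * t ^ (-β - 1))) /
          (2 * Real.sqrt (w t))) t := by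
    intro t ht
    have hu : HasDerivAt u (ηbar * (δ * t ^ (δ - 1))) t :=
      ((Real.hasDerivAt_rpow_const (Or.inl ht.ne')).const_mul ηbar).const_add (1/2)
    have hw : HasDerivAt w (2 * u t * (ηbar * (δ * t ^ (δ - 1))) + C * (-β * t ^ (-β - 1))) t := by
      have h1 : HasDerivAt (fun t => (u t) ^ 2) (2 * u t * (ηbar * (δ * t ^ (δ - 1)))) t := by
        have := hu.pow 2
        simpa [mul_comm, mul_assoc, mul_left_comm, Pi.pow_def] using this
      have h2 : HasDerivAt (fun t : ℝ => C * t ^ (-β)) (C * (-β * t ^ (-β - 1))) t :=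
        (Real.hasDerivAt_rpow_const (Or.inl ht.ne')).const_mul C
      exact h1.add h2
    exact hu.sub (hw.sqrt (hwpos t ht).ne')
  -- monotonicity of the nice form
  have hmono : MonotoneOn (fun t => u t - Real.sqrt (w t)) (Set.Ioi 0) := by
    apply monotoneOn_of_deriv_nonneg (convex_Ioi 0)
    · intro t ht
      exact (hderiv t ht).continuousAt.continuousWithinAt
    · intro t ht
      rw [interior_Ioi] at ht
      exact (hderiv t ht).differentiableAt.differentiableWithinAt
    · intro t ht
      rw [interior_Ioi] at ht
      have ht : (0:ℝ) < t := ht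
      rw [(hderiv t ht).deriv]
      -- now the inequality
      set s := Real.sqrt (w t) with hsdef
      have hwp := hwpos t ht
      have hup := hupos t ht
      have hs : 0 < s := Real.sqrt_pos.2 hwp
      have hs2 : s ^ 2 = w t := Real.sq_sqrt hwp.le
      have hsu : u t < s := by
        rw [hsdef]
        rw [show u t = Real.sqrt ((u t)^2) from (Real.sqrt_sq hup.le).symm]
        apply Real.sqrt_lt_sqrt (by positivity)
        have := Real.rpow_pos_of_pos ht (-β)
        simp only [hwdef]; nlinarith
      rw [sub_nonneg, div_le_iff₀ (by positivity)]
      have ha : t ^ (δ - 1) * t = t ^ δ := by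
        rw [← Real.rpow_add_one ht.ne' (δ - 1)]; norm_num
      have hb : t ^ (-β - 1) * t = t ^ (-β) := by
        rw [← Real.rpow_add_one ht.ne' (-β - 1)]; norm_num
      have hapos : (0:ℝ) < t ^ δ := Real.rpow_pos_of_pos ht δ
      have hbpos : (0:ℝ) < t ^ (-β) := Real.rpow_pos_of_pos ht (-β)
      have hkey : (s - u t) * (s + u t) = C * t ^ (-β) := by
        have h : s^2 - (u t)^2 = C * t ^ (-β) := by rw [hs2]; simp [hwdef]
        nlinarith [h]
      have hut : u t = 1/2 + ηbar * t ^ δ := rfl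
      have h1 : (-δ) * (2 * ηbar * t ^ δ) ≤ β * (s + u t) := by
        have e1 : β * (s + u t) = β * (s - u t) + β + β * (2 * ηbar * t ^ δ) := by
          rw [hut]; ring
        have e2 : 0 ≤ β * (s - u t) := mul_nonneg hβ.le (by linarith)
        have e3 : (-δ) * (2 * ηbar * t ^ δ) ≤ β * (2 * ηbar * t ^ δ) :=
          mul_le_mul_of_nonneg_right hβδ (by positivity)
        linarith
      have h2 := mul_le_mul_of_nonneg_right h1 (sub_nonneg.2 hsu.le)
      have hmain : 2 * u t * (ηbar * δ * t ^ δ) - β * (C * t ^ (-β))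
          ≤ 2 * s * (ηbar * δ * t ^ δ) := by
        rw [← hkey]
        nlinarith [h2]
      have hL : (2 * u t * (ηbar * (δ * t ^ (δ - 1))) + C * (-β * t ^ (-β - 1))) * t
          = 2 * u t * (ηbar * δ * t ^ δ) - β * (C * t ^ (-β)) := by
        rw [← ha, ← hb]; ring
      have hR : ηbar * (δ * t ^ (δ - 1)) * (2 * s) * t = 2 * s * (ηbar * δ * t ^ δ) := by
        rw [← ha]; ring
      have hfin : (2 * u t * (ηbar * (δ * t ^ (δ - 1))) + C * (-β * t ^ (-β - 1))) * t
          ≤ ηbar * (δ * t ^ (δ - 1)) * (2 * s) * t := by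
        rw [hL, hR]; exact hmain
      exact le_of_mul_le_mul_right hfin ht
  exact hmono.congr heq.symm
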